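/- arXiv:1207.6299 — 2 statements merged into one kernel-verified Lean document; each statement's English description precedes it below -/
import Mathlib

section
/- Let r be a positive even integer and c1, c2 rational numbers. If the polynomial identity 1 + (2 − c1)·t + (c2 − c1 + 1)·t² ≡ (1 + t)^{r+2} · (1 + c1·t + c2·t²) holds modulo t⁴ in ℚ[t], then c1 = −r/2 and c2 = r(r+1)/12. -/
open Polynomial

/-- The Chern class relation `c_t(K*(1)) = (1+t)^{r+2} · c_t(K)` truncated modulo
`t⁴` forces `c1 = -r/2` and `c2 = r(r+1)/12`. -/
theorem chern_class_relation_corank_two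
    (r : ℕ) (hr : 0 < r) (hre : Even r) (c1 c2 : ℚ)
    (h : (1 + C (2 - c1) * X + C (c2 - c1 + 1) * X ^ 2) %ₘ (X ^ 4 : ℚ[X])
        = ((1 + X) ^ (r + 2) * (1 + C c1 * X + C c2 * X ^ 2)) %ₘ (X ^ 4 : ℚ[X])) :
    c1 = -(r : ℚ) / 2 ∧ c2 = (r : ℚ) * ((r : ℚ) + 1) / 12 := by
  set P : ℚ[X] := 1 + C (2 - c1) * X + C (c2 - c1 + 1) * X ^ 2 with hP
  set Q : ℚ[X] := (1 + X) ^ (r + 2) * (1 + C c1 * X + C c2 * X ^ 2) with hQ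
  have hdvd : (X ^ 4 : ℚ[X]) ∣ (Q - P) := by
    rw [← Polynomial.modByMonic_eq_zero_iff_dvd (monic_X_pow 4),
      Polynomial.sub_modByMonic, h, sub_self]
  obtain ⟨q, hq⟩ := hdvd
  have key : ∀ k < 4, Q.coeff k = P.coeff k := by
    intro k hk
    have := congrArg (fun p => p.coeff k) hq
    simp only [Polynomial.coeff_sub] at this
    rw [show X ^ 4 * q = q * X ^ 4 by ring, Polynomial.coeff_mul_X_pow'] at this
    simp only [if_neg (by omega : ¬ 4 ≤ k)] at this
    linarith
  have hbin : ∀ k, ((1 + X : ℚ[X]) ^ (r + 2)).coeff k = ((r + 2).choose k : ℚ) := by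
    intro k
    rw [add_comm (1 : ℚ[X]) X, Polynomial.coeff_X_add_one_pow]
  have hQc : ∀ k, Q.coeff k = ((r+2).choose k : ℚ) + c1 * ((r+2).choose (k-1) : ℚ) * (if 1 ≤ k then 1 else 0) + c2 * ((r+2).choose (k-2) : ℚ) * (if 2 ≤ k then 1 else 0) := by
    intro k
    rw [hQ, mul_add, mul_add, mul_one]
    rw [show (1+X:ℚ[X])^(r+2) * (C c1 * X) = ((1+X:ℚ[X])^(r+2) * C c1) * X ^ 1 by ring]
    rw [show (1+X:ℚ[X])^(r+2) * (C c2 * X^2) = ((1+X:ℚ[X])^(r+2) * C c2) * X ^ 2 by ring]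
    simp only [Polynomial.coeff_add, Polynomial.coeff_mul_X_pow', Polynomial.coeff_mul_C, hbin]
    by_cases h1 : 1 ≤ k <;> by_cases h2 : 2 ≤ k <;> simp [h1, h2] <;> ring
  have e1 := key 1 (by norm_num)
  have e2 := key 2 (by norm_num)
  have e3 := key 3 (by norm_num)
  rw [hQc] at e1 e2 e3
  simp only [hP, Polynomial.coeff_add, Polynomial.coeff_one, Polynomial.coeff_mul_C,
    Polynomial.coeff_mul_X_pow'] at e1 e2 e3
  norm_num [Polynomial.coeff_C_mul, Polynomial.coeff_X, Polynomial.coeff_X_pow,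
    Polynomial.coeff_C, Polynomial.coeff_one] at e1 e2 e3
  have hcf : ∀ k, ((r+2).choose k : ℚ) * (k.factorial : ℚ) = ((r+2).descFactorial k : ℚ) := by
    intro k
    have : (r+2).choose k * k.factorial = (r+2).descFactorial k := by
      rw [Nat.choose_eq_descFactorial_div_factorial,
        Nat.div_mul_cancel (Nat.factorial_dvd_descFactorial _ _)]
    exact_mod_cast congrArg (Nat.cast : ℕ → ℚ) this
  have hc2 := hcf 2
  have hc3 := hcf 3
  simp [Nat.descFactorial, Nat.factorial] at hc2 hc3
  push_cast at hc2 hc3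
  set R : ℚ := (r : ℚ) with hR
  have hRnn : (0:ℚ) ≤ R := by positivity
  have hc1 : c1 = -R/2 := by linarith
  have hne : R + 2 ≠ 0 := by positivity
  refine ⟨hc1, ?_⟩
  have hmul : (R + 2) * c2 = (R + 2) * (R * (R + 1) / 12) := by
    rw [hc1] at e3
    linear_combination e3 + hc2 * (R/4) - hc3/6
  exact mul_left_cancel₀ hne hmul
end

section
/- Let W(x0,x1,x2,x3) be the 10×10 skew-symmetric matrix of linear forms with rows: (0,0,0,0,0,0,0,x0,x1,0), (0,0,0,0,0,0,x0,x1,0,x2), (0,0,0,0,0,−x0,x1,0,x2,x3), (0,0,0,0,x0,x1,0,x2,x3,0), (0,0,0,−x0,0,0,x2,−x3,0,0), (0,0,x0,−x1,0,0,x3,0,0,0), (0,−x0,−x1,0,−x2,−x3,0,0,0,0), (−x0,−x1,0,−x2,x3,0,0,0,0,0), (−x1,0,−x2,−x3,0,0,0,0,0,0), (0,−x2,−x3,0,0,0,0,0,0,0). Then det W = 0 identically as a polynomial in ℂ[x0,x1,x2,x3] (equivalently, rank W(p) ≤ 8 for every p ∈ ℂ⁴). -/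
/-- Westwick's 10×10 skew-symmetric matrix of linear forms. -/
def westwickMatrix (x0 x1 x2 x3 : ℂ) : Matrix (Fin 10) (Fin 10) ℂ :=
  Matrix.of
    ![![0, 0, 0, 0, 0, 0, 0, x0, x1, 0],
      ![0, 0, 0, 0, 0, 0, x0, x1, 0, x2],
      ![0, 0, 0, 0, 0, -x0, x1, 0, x2, x3],
      ![0, 0, 0, 0, x0, x1, 0, x2, x3, 0],
      ![0, 0, 0, -x0, 0, 0, x2, -x3, 0, 0],
      ![0, 0, x0, -x1, 0, 0, x3, 0, 0, 0],
      ![0, -x0, -x1, 0, -x2, -x3, 0, 0, 0, 0],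
      ![-x0, -x1, 0, -x2, x3, 0, 0, 0, 0, 0],
      ![-x1, 0, -x2, -x3, 0, 0, 0, 0, 0, 0],
      ![0, -x2, -x3, 0, 0, 0, 0, 0, 0, 0]]

private lemma vec10_four {α : Type*} (a0 a1 a2 a3 a4 a5 a6 a7 a8 a9 : α) :
    (![a0, a1, a2, a3, a4, a5, a6, a7, a8, a9] : Fin 10 → α) 4 = a4 := rfl
private lemma vec10_nine {α : Type*} (a0 a1 a2 a3 a4 a5 a6 a7 a8 a9 : α) :
    (![a0, a1, a2, a3, a4, a5, a6, a7, a8, a9] : Fin 10 → α) 9 = a9 := rfl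
private lemma vec10_zero {α : Type*} (a0 a1 a2 a3 a4 a5 a6 a7 a8 a9 : α) :
    (![a0, a1, a2, a3, a4, a5, a6, a7, a8, a9] : Fin 10 → α) 0 = a0 := rfl

set_option maxHeartbeats 1600000 in
/-- The determinant of Westwick's matrix vanishes identically. -/
theorem westwick_det_zero (x0 x1 x2 x3 : ℂ) :
    (westwickMatrix x0 x1 x2 x3).det = 0 := by
  rw [← Matrix.exists_mulVec_eq_zero_iff]
  by_cases h02 : x0 = 0 ∧ x2 = 0
  · obtain ⟨h0, h2⟩ := h02
    subst h0; subst h2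
    by_cases h1 : x1 = 0
    · subst h1
      refine ⟨![1, 0, 0, 0, 0, 0, 0, 0, 0, 0], ?_, ?_⟩
      · intro h
        have h' := congrFun h 0
        rw [vec10_zero] at h'
        simp at h'
      · simp only [westwickMatrix, Matrix.cons_mulVec, Matrix.cons_dotProduct,
          Matrix.dotProduct_of_isEmpty, Matrix.head_cons, Matrix.tail_cons,
          Matrix.cons_eq_zero_iff, Matrix.of_apply]
        refine ⟨by ring, by ring, by ring, by ring, by ring, by ring, by ring, by ring,
          by ring, by ring, ?_⟩
        funext i; exact i.elim0
    · refine ⟨![0, x1 * x3, 0, 0, x1 ^ 2, 0, 0, 0, 0, 0], ?_, ?_⟩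
      · intro h
        have h' := congrFun h 4
        rw [vec10_four] at h'
        exact h1 (by simpa [pow_eq_zero_iff] using h')
      · simp only [westwickMatrix, Matrix.cons_mulVec, Matrix.cons_dotProduct,
          Matrix.dotProduct_of_isEmpty, Matrix.head_cons, Matrix.tail_cons,
          Matrix.cons_eq_zero_iff, Matrix.of_apply]
        refine ⟨by ring, by ring, by ring, by ring, by ring, by ring, by ring, by ring,
          by ring, by ring, ?_⟩
        funext i; exact i.elim0
  · refine ⟨![x2 ^ 3, x1 * x2 * x3 - x0 * x3 ^ 2, -(x1 * x2 ^ 2) + x0 * x2 * x3,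
      -(x0 * x2 ^ 2), x1 ^ 2 * x2 - x0 * x1 * x3, -(x0 * x1 * x2) + x0 ^ 2 * x3,
      -(x0 ^ 2 * x2), 0, 0, x0 ^ 3], ?_, ?_⟩
    · intro h
      apply h02
      have h9 := congrFun h 9
      have h0 := congrFun h 0
      rw [vec10_nine] at h9
      rw [vec10_zero] at h0
      exact ⟨by simpa [pow_eq_zero_iff] using h9, by simpa [pow_eq_zero_iff] using h0⟩
    · simp only [westwickMatrix, Matrix.cons_mulVec, Matrix.cons_dotProduct,
        Matrix.dotProduct_of_isEmpty, Matrix.head_cons, Matrix.tail_cons,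
        Matrix.cons_eq_zero_iff, Matrix.of_apply]
      refine ⟨by ring, by ring, by ring, by ring, by ring, by ring, by ring, by ring,
        by ring, by ring, ?_⟩
      funext i; exact i.elim0
end
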